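/- Let x be a complex number and α a complex number such that neither 2α nor α+1/2 is a nonpositive integer. Then ₁F₁(α; 2α; x) · ₁F₁(α; 2α; −x) = ₁F₂(α; α+1/2, 2α; x²/4). -/

import Mathlib

/-- Pochhammer symbol (rising factorial) `(c)_k = c (c+1) ⋯ (c+k-1)` for complex `c`. -/
noncomputable def poch (c : ℂ) (k : ℕ) : ℂ := ∏ l ∈ Finset.range k, (c + l)

/-- Generalized hypergeometric series `ₚF_q(a; b; x) = Σ_k (a₁)_k⋯(a_p)_k / ((b₁)_k⋯(b_q)_k) · x^k/k!`. -/
noncomputable def pFq (a b : List ℂ) (x : ℂ) : ℂ :=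
  ∑' k : ℕ, ((a.map (fun c => poch c k)).prod / (b.map (fun c => poch c k)).prod)
    * x ^ k / (Nat.factorial k)

/-- `c` is not a nonpositive integer, i.e. `c ≠ 0, -1, -2, …`. -/
def NotNonposInt (c : ℂ) : Prop := ∀ n : ℕ, c ≠ -(n : ℂ)

lemma poch_zero (c : ℂ) : poch c 0 = 1 := by simp [poch]

lemma poch_succ (c : ℂ) (k : ℕ) : poch c (k+1) = poch c k * (c + k) := by
  simp [poch, Finset.prod_range_succ]

lemma poch_add (c : ℂ) (m n : ℕ) : poch c (m + n) = poch c m * poch (c + m) n := by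
  simp only [poch, Finset.prod_range_add]
  congr 1
  refine Finset.prod_congr rfl fun l _ => ?_
  push_cast; ring

lemma poch_ne_zero {c : ℂ} (h : NotNonposInt c) (k : ℕ) : poch c k ≠ 0 := by
  rw [poch]
  refine Finset.prod_ne_zero_iff.2 fun l _ => ?_
  intro hl
  exact h l (by linear_combination hl)

lemma poch_reflect (c : ℂ) (k : ℕ) : poch c k = (-1)^k * poch (1 - c - k) k := by
  rw [poch, poch, ← Finset.prod_range_reflect (fun l => (c + l : ℂ)) k]
  rw [show ((-1:ℂ))^k = ∏ _l ∈ Finset.range k, (-1:ℂ) by simp, ← Finset.prod_mul_distrib]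
  refine Finset.prod_congr rfl fun l hl => ?_
  rw [Finset.mem_range] at hl
  have : ((k - 1 - l : ℕ) : ℂ) = (k : ℂ) - 1 - l := by
    have h1 : (1:ℕ) + l ≤ k := by omega
    push_cast [Nat.sub_sub, Nat.cast_sub h1]; ring
  rw [this]; ring

/-- duplication: (2a)_{2m} = 4^m (a)_m (a+1/2)_m -/
lemma poch_dup (a : ℂ) (m : ℕ) :
    poch (2*a) (2*m) = 4^m * poch a m * poch (a + 1/2) m := by
  induction m with
  | zero => simp [poch_zero]
  | succ m ih =>
    have h2 : 2*(m+1) = (2*m) + 1 + 1 := by ring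
    rw [h2, poch_succ, poch_succ, ih, poch_succ, poch_succ]
    push_cast
    ring

/-- Vandermonde convolution for rising factorials. -/
lemma poch_vandermonde (M : ℕ) (x y : ℂ) :
    ∑ p ∈ Finset.range (M+1), (M.choose p : ℂ) * poch x p * poch y (M-p)
      = poch (x+y) M := by
  induction M generalizing y with
  | zero => simp [poch_zero]
  | succ M ih =>
    have key : ∀ p ∈ Finset.range (M+1),
        (M.choose p : ℂ) * poch x p * poch y (M+1-p)
          = (M.choose p : ℂ) * poch x p * poch y (M-p) * (y + (M - p : ℕ)) := by
      intro p hp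
      rw [Finset.mem_range] at hp
      have : M + 1 - p = (M - p) + 1 := by omega
      rw [this, poch_succ]; ring
    -- target sum over range (M+2)
    rw [Finset.sum_range_succ'] -- splits off p = 0
    -- ∑ p in range (M+1), f (p+1) + f 0
    have pascal : ∀ p : ℕ, ((M+1).choose (p+1) : ℂ) = (M.choose p : ℂ) + (M.choose (p+1) : ℂ) := by
      intro p; rw [Nat.choose_succ_succ]; push_cast; ring
    have split : ∑ p ∈ Finset.range (M+1),
        ((M+1).choose (p+1) : ℂ) * poch x (p+1) * poch y (M+1-(p+1))
        = (∑ p ∈ Finset.range (M+1), (M.choose p : ℂ) * poch x (p+1) * poch y (M-p))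
          + ∑ p ∈ Finset.range (M+1), (M.choose (p+1) : ℂ) * poch x (p+1) * poch y (M-p) := by
      rw [← Finset.sum_add_distrib]
      refine Finset.sum_congr rfl fun p hp => ?_
      rw [pascal]
      have : M + 1 - (p+1) = M - p := by omega
      rw [this]; ring
    rw [split]
    -- second sum + p=0 term = ∑ p in range (M+1), C(M,p) (x)_p (y)_{M+1-p}
    have second : (∑ p ∈ Finset.range (M+1), (M.choose (p+1) : ℂ) * poch x (p+1) * poch y (M-p))
        + ((M+1).choose 0 : ℂ) * poch x 0 * poch y (M+1-0)
        = ∑ p ∈ Finset.range (M+1), (M.choose p : ℂ) * poch x p * poch y (M+1-p) := by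
      have e1 := Finset.sum_range_succ' (fun p => (M.choose p : ℂ) * poch x p * poch y (M+1-p)) (M+1)
      have e2 : ∑ p ∈ Finset.range (M+2), (M.choose p : ℂ) * poch x p * poch y (M+1-p)
          = ∑ p ∈ Finset.range (M+1), (M.choose p : ℂ) * poch x p * poch y (M+1-p) := by
        rw [Finset.sum_range_succ]
        simp [Nat.choose_eq_zero_of_lt (by omega : M < M+1)]
      rw [← e2, e1]
      congr 1
      · refine Finset.sum_congr rfl fun p hp => ?_
        have : M + 1 - (p+1) = M - p := by omega
        rw [this]
      · simp
    rw [add_assoc, second]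
    -- now combine first sum and "second" using (x)_{p+1} = (x)_p (x+p)
    have first : ∀ p ∈ Finset.range (M+1),
        (M.choose p : ℂ) * poch x (p+1) * poch y (M-p)
          = (M.choose p : ℂ) * poch x p * poch y (M-p) * (x + p) := by
      intro p _; rw [poch_succ]; ring
    rw [Finset.sum_congr rfl first, Finset.sum_congr rfl key, ← Finset.sum_add_distrib]
    have comb : ∀ p ∈ Finset.range (M+1),
        (M.choose p : ℂ) * poch x p * poch y (M-p) * (x + p)
          + (M.choose p : ℂ) * poch x p * poch y (M-p) * (y + (M - p : ℕ))
          = ((M.choose p : ℂ) * poch x p * poch y (M-p)) * (x + y + M) := by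
      intro p hp
      rw [Finset.mem_range] at hp
      have : ((M - p : ℕ) : ℂ) = (M : ℂ) - p := by
        rw [Nat.cast_sub (by omega)]
      rw [this]; ring
    rw [Finset.sum_congr rfl comb, ← Finset.sum_mul, ih, ← poch_succ]

lemma poch_L2 (M : ℕ) (x y : ℂ) :
    ∑ p ∈ Finset.range (M+1), (M.choose p : ℂ) * (-1)^p * poch x p * poch (y+p) (M-p)
      = poch (y-x) M := by
  have term : ∀ p ∈ Finset.range (M+1),
      (M.choose p : ℂ) * (-1)^p * poch x p * poch (y+p) (M-p)
        = (-1)^M * ((M.choose p : ℂ) * poch x p * poch (1-y-M) (M-p)) := by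
    intro p hp
    rw [Finset.mem_range] at hp
    have hc : ((M - p : ℕ) : ℂ) = (M : ℂ) - p := by rw [Nat.cast_sub (by omega)]
    rw [poch_reflect (y+p) (M-p), hc]
    have : (1 : ℂ) - (y + p) - ((M:ℂ) - p) = 1 - y - M := by ring
    rw [this]
    have hs : ((-1:ℂ))^p * (-1)^(M-p) = (-1)^M := by
      rw [← pow_add]; congr 1; omega
    calc (M.choose p : ℂ) * (-1)^p * poch x p * ((-1)^(M-p) * poch (1-y-(M:ℂ)) (M-p))
        = ((-1:ℂ))^p * (-1)^(M-p) * ((M.choose p : ℂ) * poch x p * poch (1-y-(M:ℂ)) (M-p)) := by ring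
      _ = (-1)^M * ((M.choose p : ℂ) * poch x p * poch (1-y-(M:ℂ)) (M-p)) := by rw [hs]
  rw [Finset.sum_congr rfl term, ← Finset.mul_sum, poch_vandermonde]
  rw [poch_reflect (y-x) M]
  congr 1
  ring_nf

lemma NotNonposInt.shift {c : ℂ} (h : NotNonposInt c) (k : ℕ) : NotNonposInt (c + k) := by
  intro n hn
  apply h (n + k)
  push_cast
  linear_combination hn

lemma NotNonposInt.half {c : ℂ} (h : NotNonposInt (2*c)) : NotNonposInt c := by
  intro n hn
  apply h (2*n)
  push_cast
  linear_combination 2*hn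

noncomputable def uC (α : ℂ) (p : ℕ) : ℂ := (1/16)^p / (poch (α+1/2) p * p.factorial)
noncomputable def rC (α : ℂ) (m : ℕ) : ℂ :=
  poch α m / (poch (α+1/2) m * poch (2*α) m * m.factorial)

lemma factC_ne (n : ℕ) : ((n.factorial : ℂ)) ≠ 0 := by
  exact_mod_cast Nat.cast_ne_zero.2 (Nat.factorial_ne_zero n)

lemma identity_C3 (α : ℂ) (h1 : NotNonposInt (2*α)) (h2 : NotNonposInt (α + 1/2)) (m : ℕ) :
    ∑ kl ∈ Finset.HasAntidiagonal.antidiagonal m, uC α kl.1 * uC α kl.2 = rC α m * (1/4)^m := by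
  have hbp : ∀ k n : ℕ, poch (α + 1/2 + k) n ≠ 0 := fun k n => poch_ne_zero (h2.shift k) n
  have hbne : ∀ n, poch (α + 1/2) n ≠ 0 := fun n => poch_ne_zero h2 n
  have h2ne : ∀ n, poch (2*α) n ≠ 0 := fun n => poch_ne_zero h1 n
  rw [Finset.Nat.sum_antidiagonal_eq_sum_range_succ_mk]
  have key : ∀ p ∈ Finset.range (m+1),
      uC α p * uC α (m - p)
        = ((1/16)^m / ((m.factorial : ℂ) * (poch (α+1/2) m * poch (α+1/2) m))) *
          ((m.choose p : ℂ) * (-1)^p * poch (1-(α+1/2)-m) p * poch ((α+1/2)+p) (m-p)) := by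
    intro p hp
    rw [Finset.mem_range] at hp
    have hpm : p ≤ m := by omega
    have refl1 : ((-1:ℂ))^p * poch (1-(α+1/2)-(m:ℂ)) p = poch ((α+1/2) + (m-p : ℕ)) p := by
      rw [poch_reflect ((α+1/2) + ((m-p:ℕ):ℂ)) p]
      have hc : ((m - p : ℕ) : ℂ) = (m:ℂ) - p := by rw [Nat.cast_sub hpm]
      rw [hc]
      ring_nf
    have split1 : poch (α+1/2) m = poch (α+1/2) p * poch ((α+1/2)+p) (m-p) := by
      rw [← poch_add, Nat.add_sub_cancel' hpm]
    have split2 : poch (α+1/2) m = poch (α+1/2) (m-p) * poch ((α+1/2) + ((m-p:ℕ):ℂ)) p := by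
      conv_lhs => rw [show m = (m-p) + p by omega]
      rw [poch_add]
    have hPmPm : poch (α+1/2) m * poch (α+1/2) m
        = (poch (α+1/2) p * poch ((α+1/2)+p) (m-p))
          * (poch (α+1/2) (m-p) * poch ((α+1/2) + ((m-p:ℕ):ℂ)) p) := by
      rw [← split1, ← split2]
    have hfact : ((m.factorial : ℂ)) = (m.choose p : ℂ) * (p.factorial) * ((m-p).factorial) := by
      rw [← Nat.choose_mul_factorial_mul_factorial hpm]
      push_cast; ring
    have h16 : ((1:ℂ)/16)^p * (1/16)^(m-p) = (1/16)^m := by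
      rw [← pow_add]; congr 1; omega
    rw [uC, uC]
    rw [show (m.choose p : ℂ) * (-1)^p * poch (1-(α+1/2)-(m:ℂ)) p * poch ((α+1/2)+p) (m-p)
        = (m.choose p : ℂ) * ((-1:ℂ)^p * poch (1-(α+1/2)-(m:ℂ)) p) * poch ((α+1/2)+p) (m-p) by ring,
      refl1, hfact, hPmPm]
    rw [div_mul_div_comm, h16, div_mul_eq_mul_div]
    rw [div_eq_div_iff]
    · ring
    all_goals
      repeat' apply mul_ne_zero
    all_goals
      first
        | exact factC_ne _
        | exact hbne _
        | exact hbp _ _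
        | exact_mod_cast Nat.cast_ne_zero.2 (Nat.choose_pos hpm).ne'
  rw [Finset.sum_congr rfl key, ← Finset.mul_sum, poch_L2]
  have hyx : (α+1/2) - (1 - (α+1/2) - (m:ℂ)) = 2*α + m := by ring
  rw [hyx]
  have hdup : poch (2*α) m * poch (2*α + m) m = 4^m * poch α m * poch (α+1/2) m := by
    rw [← poch_add, show m + m = 2*m by ring, poch_dup]
  have h416 : ((1:ℂ)/16)^m * 4^m = (1/4)^m := by rw [← mul_pow]; norm_num
  rw [rC, div_mul_eq_mul_div, div_mul_eq_mul_div, div_eq_div_iff]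
  · linear_combination ((1:ℂ)/16)^m * (m.factorial : ℂ) * poch (α+1/2) m * hdup
      + ((m.factorial : ℂ) * poch α m * poch (α+1/2) m * poch (α+1/2) m) * h416
  all_goals repeat' apply mul_ne_zero
  all_goals first | exact factC_ne _ | exact hbne _ | exact h2ne _

noncomputable def eC (n : ℕ) : ℂ := (1/2)^n / n.factorial
noncomputable def tC (α : ℂ) (n : ℕ) : ℂ := poch α n / (poch (2*α) n * n.factorial)
noncomputable def vC (α : ℂ) (n : ℕ) : ℂ := if n % 2 = 0 then uC α (n/2) else 0

/-- general duplication -/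
lemma poch_dup' (α : ℂ) (n : ℕ) :
    poch (2*α) n = 2^n * poch α (n - n/2) * poch (α + 1/2) (n/2) := by
  rcases Nat.even_or_odd n with ⟨M, hM⟩ | ⟨M, hM⟩
  · have h1 : n = 2*M := by omega
    subst h1
    rw [show 2*M - (2*M)/2 = M by omega, show (2*M)/2 = M by omega, poch_dup,
      show (2:ℂ)^(2*M) = 4^M by rw [pow_mul]; norm_num]
  · subst hM
    rw [show 2*M+1 - (2*M+1)/2 = M+1 by omega, show (2*M+1)/2 = M by omega,
      poch_succ, poch_dup, poch_succ,
      show (2:ℂ)^(2*M+1) = 2 * 4^M by rw [pow_succ, pow_mul]; norm_num; ring]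
    push_cast
    ring

/-- scalar lemma -/
lemma scalar_SC (n : ℕ) :
    ∀ p, p ≤ n/2 →
    ((n.factorial : ℂ)) = 4^p * ((n - 2*p).factorial : ℂ) * (p.factorial : ℂ)
      * ((n/2).choose p : ℂ) * (-1)^p * poch ((1:ℂ)/2 - ((n - n/2 : ℕ) : ℂ)) p := by
  intro p hp
  induction p with
  | zero => simp [poch_zero]
  | succ p ih =>
    have hp' : p ≤ n/2 := by omega
    have IH := ih hp'
    set M := n/2 with hMdef
    set M' := n - n/2 with hM'def
    have hMM : n = M + M' := by omega
    have h2p : 2*(p+1) ≤ n := by omega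
    have hf1 : ((n - 2*p).factorial : ℂ)
        = ((n - 2*(p+1)).factorial : ℂ) * (((n - 2*(p+1) : ℕ) : ℂ) + 1) * (((n - 2*(p+1) : ℕ) : ℂ) + 2) := by
      rw [show n - 2*p = (n - 2*(p+1)) + 1 + 1 by omega, Nat.factorial_succ, Nat.factorial_succ]
      push_cast
      ring
    have hc1 : ((M.choose (p+1) : ℂ)) * (↑p+1) = (M.choose p : ℂ) * ((M - p : ℕ) : ℂ) := by
      have := Nat.choose_succ_right_eq M p
      exact_mod_cast congrArg (Nat.cast : ℕ → ℂ) this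
    have hpo : poch ((1:ℂ)/2 - (M' : ℂ)) (p+1)
        = poch ((1:ℂ)/2 - (M' : ℂ)) p * ((1:ℂ)/2 - M' + p) := poch_succ _ p
    have har : (((n - 2*(p+1) : ℕ) : ℂ) + 2) * (((n - 2*(p+1) : ℕ) : ℂ) + 1)
        = 4 * ((M - p : ℕ) : ℂ) * ((M' : ℂ) - 1/2 - p) := by
      have c1 : ((n - 2*(p+1) : ℕ) : ℂ) = (n : ℂ) - 2*p - 2 := by
        rw [Nat.cast_sub h2p]; push_cast; ring
      have c3 : ((M - p : ℕ) : ℂ) = (M : ℂ) - p := by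
        rw [Nat.cast_sub (by omega)]
      have c4 : (n : ℂ) = (M : ℂ) + (M' : ℂ) := by exact_mod_cast congrArg (Nat.cast : ℕ → ℂ) hMM
      have c5 : (M' : ℂ) = (M : ℂ) ∨ (M' : ℂ) = (M : ℂ) + 1 := by
        have h5 : M' = M ∨ M' = M + 1 := by omega
        rcases h5 with h | h
        · left; exact_mod_cast congrArg (Nat.cast : ℕ → ℂ) h
        · right; exact_mod_cast congrArg (Nat.cast : ℕ → ℂ) h
      rcases c5 with h | h <;> rw [c1, c3, c4, h] <;> ring
    rw [hpo, Nat.factorial_succ p]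
    push_cast
    linear_combination IH
      + (4:ℂ)^p * (p.factorial:ℂ) * (-1)^p * poch ((1:ℂ)/2 - (M':ℂ)) p * (M.choose p : ℂ) * hf1
      + (4:ℂ)^p * (p.factorial:ℂ) * (-1)^p * poch ((1:ℂ)/2 - (M':ℂ)) p * (M.choose p : ℂ) * ((n - 2*(p+1)).factorial : ℂ) * har
      - 4 * (4:ℂ)^p * (p.factorial:ℂ) * (-1)^p * poch ((1:ℂ)/2 - (M':ℂ)) p * ((n - 2*(p+1)).factorial : ℂ) * ((M':ℂ) - 1/2 - (p:ℂ)) * hc1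

lemma identity_C1 (α : ℂ) (h1 : NotNonposInt (2*α)) (h2 : NotNonposInt (α + 1/2)) (n : ℕ) :
    ∑ kl ∈ Finset.HasAntidiagonal.antidiagonal n, eC kl.1 * vC α kl.2 = tC α n := by
  have hbp : ∀ k m : ℕ, poch (α + 1/2 + k) m ≠ 0 := fun k m => poch_ne_zero (h2.shift k) m
  have hbne : ∀ m, poch (α + 1/2) m ≠ 0 := fun m => poch_ne_zero h2 m
  have hane : ∀ m, poch α m ≠ 0 := fun m => poch_ne_zero h1.half m
  have h2ne : ((2:ℂ))^n ≠ 0 := pow_ne_zero _ (by norm_num)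
  rw [Finset.Nat.sum_antidiagonal_eq_sum_range_succ_mk]
  -- restrict to even n - k
  rw [← Finset.sum_filter_of_ne (p := fun k => (n - k) % 2 = 0)
    (fun k _ hne => by
      by_contra hodd
      exact hne (by simp [vC, if_neg hodd]))]
  -- reindex by p = (n-k)/2
  have hbij : ∑ k ∈ (Finset.range (n+1)).filter (fun k => (n - k) % 2 = 0), eC k * vC α (n - k)
      = ∑ p ∈ Finset.range (n/2 + 1), eC (n - 2*p) * uC α p := by
    refine Finset.sum_nbij' (fun k => (n - k)/2) (fun p => n - 2*p) ?_ ?_ ?_ ?_ ?_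
    · intro k hk
      simp only [Finset.mem_filter, Finset.mem_range] at hk ⊢
      omega
    · intro p hp
      simp only [Finset.mem_filter, Finset.mem_range] at hp ⊢
      omega
    · intro k hk
      simp only [Finset.mem_filter, Finset.mem_range] at hk
      omega
    · intro p hp
      simp only [Finset.mem_range] at hp
      omega
    · intro k hk
      simp only [Finset.mem_filter, Finset.mem_range] at hk
      have e1 : n - 2*((n-k)/2) = k := by omega
      have e2 : vC α (n - k) = uC α ((n-k)/2) := by
        simp [vC, if_pos hk.2]
      rw [e1, e2]
  rw [hbij]
  set M := n/2 with hM
  set M' := n - n/2 with hM'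
  have key : ∀ p ∈ Finset.range (M + 1),
      eC (n - 2*p) * uC α p
        = (1 / ((2:ℂ)^n * (n.factorial : ℂ) * poch (α+1/2) M)) *
          ((M.choose p : ℂ) * (-1)^p * poch ((1:ℂ)/2 - (M' : ℂ)) p * poch ((α+1/2) + p) (M - p)) := by
    intro p hp
    rw [Finset.mem_range] at hp
    have hpm : p ≤ M := by omega
    have hSC := scalar_SC n p hpm
    have hsplit : poch (α+1/2) M = poch (α+1/2) p * poch ((α+1/2) + p) (M - p) := by
      rw [← poch_add, Nat.add_sub_cancel' hpm]
    have hPW : ((1:ℂ)/2)^(n - 2*p) * (1/16)^p * ((2:ℂ)^n * 4^p) = 1 := by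
      have h2n : (2:ℂ)^n = 2^(n - 2*p) * 4^p := by
        rw [show (4:ℂ)^p = 2^(2*p) by rw [pow_mul]; norm_num, ← pow_add]
        congr 1
        omega
      have A : ((1:ℂ)/2)^(n - 2*p) * 2^(n - 2*p) = 1 := by rw [← mul_pow]; norm_num
      have B : ((1:ℂ)/16)^p * (4:ℂ)^p * (4:ℂ)^p = 1 := by rw [← mul_pow, ← mul_pow]; norm_num
      rw [h2n]
      linear_combination (((1:ℂ)/16)^p * 4^p * 4^p) * A + B
    rw [eC, uC, div_mul_div_comm, div_mul_eq_mul_div, div_eq_div_iff]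
    · rw [hSC, hsplit]
      linear_combination (((n - 2*p).factorial : ℂ) * (p.factorial : ℂ) * ((M.choose p : ℂ))
        * (-1)^p * poch ((1:ℂ)/2 - (M' : ℂ)) p * poch (α+1/2) p * poch ((α+1/2) + p) (M - p)) * hPW
    · exact mul_ne_zero (factC_ne _) (mul_ne_zero (hbne p) (factC_ne p))
    · exact mul_ne_zero (mul_ne_zero h2ne (factC_ne n)) (hbne M)
  rw [Finset.sum_congr rfl key, ← Finset.mul_sum, poch_L2 M ((1:ℂ)/2 - (M' : ℂ)) (α+1/2)]
  have hy : (α+1/2) - ((1:ℂ)/2 - (M' : ℂ)) = α + M' := by ring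
  rw [hy]
  have hdup := poch_dup' α n
  have hsplitn : poch α n = poch α M' * poch (α + M') M := by
    conv_lhs => rw [show n = M' + M by omega]
    rw [poch_add]
  rw [← hM, ← hM'] at hdup
  rw [tC, hdup, hsplitn, div_mul_eq_mul_div, one_mul]
  rw [div_eq_div_iff (by exact mul_ne_zero (mul_ne_zero h2ne (factC_ne n)) (hbne M))
    (by repeat' apply mul_ne_zero
        all_goals first | exact h2ne | exact factC_ne _ | exact hbne _ | exact hane _)]
  ring

lemma identity_C2 (n : ℕ) :
    ∑ kl ∈ Finset.HasAntidiagonal.antidiagonal n, eC kl.1 * ((-1)^kl.2 * eC kl.2)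
      = if n = 0 then 1 else 0 := by
  rw [Finset.Nat.sum_antidiagonal_eq_sum_range_succ_mk]
  have key : ∀ k ∈ Finset.range (n+1),
      eC k * ((-1)^(n-k) * eC (n-k))
        = (((1:ℂ)/2)^k * (-(1:ℂ)/2)^(n-k) * (n.choose k : ℂ)) / (n.factorial : ℂ) := by
    intro k hk
    rw [Finset.mem_range] at hk
    have hkn : k ≤ n := by omega
    have hfact : ((n.factorial : ℂ)) = (n.choose k : ℂ) * (k.factorial) * ((n-k).factorial) := by
      rw [← Nat.choose_mul_factorial_mul_factorial hkn]; push_cast; ring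
    have hneg : ((-1:ℂ))^(n-k) * ((1:ℂ)/2)^(n-k) = (-(1:ℂ)/2)^(n-k) := by
      rw [← mul_pow]; norm_num
    have lhs : eC k * ((-1)^(n-k) * eC (n-k))
        = ((-1:ℂ)^(n-k) * ((1:ℂ)/2)^(n-k) * ((1:ℂ)/2)^k) / ((k.factorial : ℂ) * ((n-k).factorial : ℂ)) := by
      rw [eC, eC]; ring
    rw [lhs, div_eq_div_iff (mul_ne_zero (factC_ne k) (factC_ne (n-k))) (factC_ne n), hfact]
    linear_combination ((n.choose k : ℂ) * (k.factorial:ℂ) * ((n-k).factorial:ℂ) * ((1:ℂ)/2)^k) * hneg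
  rw [Finset.sum_congr rfl key]
  rw [show ∑ k ∈ Finset.range (n+1), (((1:ℂ)/2)^k * (-(1:ℂ)/2)^(n-k) * (n.choose k : ℂ)) / (n.factorial : ℂ)
      = (∑ k ∈ Finset.range (n+1), ((1:ℂ)/2)^k * (-(1:ℂ)/2)^(n-k) * (n.choose k : ℂ)) / (n.factorial : ℂ)
    from (Finset.sum_div _ _ _).symm]
  rw [← add_pow ((1:ℂ)/2) (-(1:ℂ)/2) n, show ((1:ℂ)/2 + -(1:ℂ)/2) = 0 by ring, zero_pow_eq]
  split_ifs with h
  · subst h; simp [Nat.factorial]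
  · simp

lemma sum_e (y : ℂ) : Summable (fun n => ‖eC n * y^n‖) := by
  refine (Real.summable_pow_div_factorial (‖y‖/2)).congr fun n => ?_
  rw [eC, norm_mul, norm_div, norm_pow, norm_pow, Complex.norm_natCast]
  have h2 : ‖(1:ℂ)/2‖ = (1:ℝ)/2 := by
    rw [norm_div, norm_one, Complex.norm_ofNat]
  rw [h2, div_pow]
  simp only [one_div, inv_pow]
  ring

lemma sum_u (α : ℂ) (h2 : NotNonposInt (α + 1/2)) (y : ℂ) :
    Summable (fun p => ‖uC α p * y^p‖) := by
  set b : ℂ := α + 1/2 with hb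
  have hbne : ∀ p : ℕ, b + (p:ℂ) ≠ 0 := by
    intro p hzero
    exact h2 p (by linear_combination hzero)
  apply summable_of_ratio_norm_eventually_le (r := 1/2) (by norm_num)
  have hN : ∀ᶠ p : ℕ in Filter.atTop, (‖b‖ + ‖y‖ + 1 : ℝ) ≤ p := by
    exact Filter.eventually_atTop.2 ⟨⌈‖b‖ + ‖y‖ + 1⌉₊, fun p hp => le_trans (Nat.le_ceil _) (by exact_mod_cast hp)⟩
  filter_upwards [hN] with p hp
  have hA : poch b p ≠ 0 := poch_ne_zero h2 p
  have hB : ((p:ℂ)+1) ≠ 0 := Nat.cast_add_one_ne_zero p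
  have hrec : uC α (p+1) * y^(p+1) = (uC α p * y^p) * (y / (16 * (b + p) * (p+1))) := by
    rw [uC, uC, poch_succ, Nat.factorial_succ]
    push_cast
    rw [← hb]
    field_simp
    ring
  rw [norm_norm, norm_norm, hrec, norm_mul]
  have hb0 : ‖b + (p:ℂ)‖ > 0 := norm_pos_iff.2 (hbne p)
  have h1 : ‖y / (16 * (b + p) * (p+1))‖ ≤ 1/2 := by
    rw [norm_div]
    have hd0 : (0:ℝ) < ‖(16:ℂ) * (b + p) * (p+1)‖ :=
      norm_pos_iff.2 (mul_ne_zero (mul_ne_zero (by norm_num) (hbne p)) hB)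
    rw [div_le_iff₀ hd0]
    have e1 : ‖(16:ℂ) * (b + p) * (p+1)‖ = 16 * ‖b + (p:ℂ)‖ * ‖((p:ℂ)+1)‖ := by
      rw [norm_mul, norm_mul]; norm_num
    have e2 : (p:ℝ) - ‖b‖ ≤ ‖b + (p:ℂ)‖ := by
      have h := norm_sub_norm_le ((p:ℂ)) (-b)
      rw [norm_neg, sub_neg_eq_add, Complex.norm_natCast] at h
      calc (p:ℝ) - ‖b‖ ≤ ‖(p:ℂ) + b‖ := h
        _ = ‖b + (p:ℂ)‖ := by rw [add_comm]
    have e3 : ‖((p:ℂ)+1)‖ = (p:ℝ)+1 := by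
      have hcast : ((p:ℂ)+1) = ((p+1 : ℕ) : ℂ) := by push_cast; ring
      rw [hcast, Complex.norm_natCast]
      push_cast; ring
    rw [e1, e3]
    nlinarith [norm_nonneg b, norm_nonneg y]
  calc ‖uC α p * y^p‖ * ‖y / (16 * (b + p) * (p+1))‖
      ≤ ‖uC α p * y^p‖ * (1/2) := mul_le_mul_of_nonneg_left h1 (norm_nonneg _)
    _ = 1/2 * ‖uC α p * y^p‖ := by ring

lemma sum_v (α : ℂ) (h2 : NotNonposInt (α + 1/2)) (y : ℂ) :
    Summable (fun n => ‖vC α n * y^n‖) := by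
  have hinj : Function.Injective (fun k : ℕ => 2*k) := fun a b h => by
    dsimp at h; omega
  rw [← Function.Injective.summable_iff hinj]
  · apply Summable.congr (sum_u α h2 (y^2))
    intro p
    simp only [Function.comp]
    have hv : vC α (2*p) = uC α p := by simp [vC]
    have hy : y^(2*p) = (y^2)^p := by rw [pow_mul]
    rw [hv, hy]
  · intro n hn
    have hodd : n % 2 = 1 := by
      rcases Nat.even_or_odd n with ⟨m, hm⟩ | hodd
      · exfalso; exact hn ⟨m, by dsimp; omega⟩
      · rcases hodd with ⟨m, hm⟩; omega
    simp [vC, hodd]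

set_option maxHeartbeats 2000000 in
theorem preece_identity (x α : ℂ)
    (h1 : NotNonposInt (2*α)) (h2 : NotNonposInt (α + 1/2)) :
    pFq [α] [2*α] x * pFq [α] [2*α] (-x) =
      pFq [α] [α + 1/2, 2*α] (x^2/4) := by
  -- unfold pFq for the 1F1 factors
  have hpFq1 : ∀ y : ℂ, pFq [α] [2*α] y = ∑' n, tC α n * y^n := by
    intro y
    rw [pFq]
    refine tsum_congr fun n => ?_
    simp only [List.map_cons, List.map_nil, List.prod_cons, List.prod_nil, mul_one]
    rw [tC]
    ring
  have hpFq2 : pFq [α] [α + 1/2, 2*α] (x^2/4) = ∑' m, rC α m * (x^2/4)^m := by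
    rw [pFq]
    refine tsum_congr fun m => ?_
    simp only [List.map_cons, List.map_nil, List.prod_cons, List.prod_nil, mul_one]
    rw [rC]
    ring
  -- Cauchy product step: F(y) = E(y) * G(y)
  have hF : ∀ y : ℂ, (∑' n, tC α n * y^n)
      = (∑' n, eC n * y^n) * (∑' n, vC α n * y^n) := by
    intro y
    rw [tsum_mul_tsum_eq_tsum_sum_antidiagonal_of_summable_norm (sum_e y) (sum_v α h2 y)]
    refine tsum_congr fun n => ?_
    have : ∑ kl ∈ Finset.HasAntidiagonal.antidiagonal n, (eC kl.1 * y^kl.1) * (vC α kl.2 * y^kl.2)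
        = (∑ kl ∈ Finset.HasAntidiagonal.antidiagonal n, eC kl.1 * vC α kl.2) * y^n := by
      rw [Finset.sum_mul]
      refine Finset.sum_congr rfl fun kl hkl => ?_
      have hn : kl.1 + kl.2 = n := Finset.HasAntidiagonal.mem_antidiagonal.1 hkl
      rw [← hn, pow_add]
      ring
    rw [this, identity_C1 α h1 h2 n]
  -- E(x) * E(-x) = 1
  have hE : (∑' n, eC n * x^n) * (∑' n, eC n * (-x)^n) = 1 := by
    rw [tsum_mul_tsum_eq_tsum_sum_antidiagonal_of_summable_norm (sum_e x) (sum_e (-x))]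
    have hcoef : ∀ n, ∑ kl ∈ Finset.HasAntidiagonal.antidiagonal n, (eC kl.1 * x^kl.1) * (eC kl.2 * (-x)^kl.2)
        = (if n = 0 then 1 else 0 : ℂ) * x^n := by
      intro n
      rw [← identity_C2 n, Finset.sum_mul]
      refine Finset.sum_congr rfl fun kl hkl => ?_
      have hn : kl.1 + kl.2 = n := Finset.HasAntidiagonal.mem_antidiagonal.1 hkl
      rw [← hn, pow_add, neg_pow x kl.2]
      ring
    rw [tsum_congr hcoef, tsum_eq_single 0 (by intro n hn; rw [if_neg hn]; ring)]
    simp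
  -- G(-x) = G(x)
  have hV : (∑' n, vC α n * (-x)^n) = (∑' n, vC α n * x^n) := by
    refine tsum_congr fun n => ?_
    rcases Nat.even_or_odd n with he | ho
    · rw [he.neg_pow]
    · have : n % 2 = 1 := Nat.odd_iff.1 ho
      simp [vC, this]
  -- G(x)^2 via Cauchy product
  have hG2 : (∑' n, vC α n * x^n) * (∑' n, vC α n * x^n)
      = ∑' n, (∑ kl ∈ Finset.HasAntidiagonal.antidiagonal n, vC α kl.1 * vC α kl.2) * x^n := by
    rw [tsum_mul_tsum_eq_tsum_sum_antidiagonal_of_summable_norm (sum_v α h2 x) (sum_v α h2 x)]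
    refine tsum_congr fun n => ?_
    rw [Finset.sum_mul]
    refine Finset.sum_congr rfl fun kl hkl => ?_
    have hn : kl.1 + kl.2 = n := Finset.HasAntidiagonal.mem_antidiagonal.1 hkl
    rw [← hn, pow_add]
    ring
  -- summability of the Cauchy coefficients
  have hsumW : Summable (fun n => (∑ kl ∈ Finset.HasAntidiagonal.antidiagonal n, vC α kl.1 * vC α kl.2) * x^n) := by
    have h := (summable_norm_sum_mul_antidiagonal_of_summable_norm (sum_v α h2 x) (sum_v α h2 x)).of_norm
    refine h.congr fun n => ?_
    rw [Finset.sum_mul]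
    refine Finset.sum_congr rfl fun kl hkl => ?_
    have hn : kl.1 + kl.2 = n := Finset.HasAntidiagonal.mem_antidiagonal.1 hkl
    rw [← hn, pow_add]
    ring
  -- even coefficients
  have hev : ∀ m : ℕ, (∑ kl ∈ Finset.HasAntidiagonal.antidiagonal (2*m), vC α kl.1 * vC α kl.2) * x^(2*m)
      = rC α m * (x^2/4)^m := by
    intro m
    have hred : ∑ kl ∈ Finset.HasAntidiagonal.antidiagonal (2*m), vC α kl.1 * vC α kl.2
        = ∑ kl ∈ Finset.HasAntidiagonal.antidiagonal m, uC α kl.1 * uC α kl.2 := by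
      rw [Finset.Nat.sum_antidiagonal_eq_sum_range_succ_mk,
        Finset.Nat.sum_antidiagonal_eq_sum_range_succ_mk]
      rw [← Finset.sum_filter_of_ne (p := fun k => k % 2 = 0)
        (fun k _ hne => by
          by_contra hodd
          exact hne (by simp [vC, if_neg hodd]))]
      refine Finset.sum_nbij' (fun k => k/2) (fun p => 2*p) ?_ ?_ ?_ ?_ ?_
      · intro k hk
        simp only [Finset.mem_filter, Finset.mem_range] at hk ⊢
        omega
      · intro p hp
        simp only [Finset.mem_filter, Finset.mem_range] at hp ⊢
        omega
      · intro k hk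
        simp only [Finset.mem_filter, Finset.mem_range] at hk
        omega
      · intro p hp
        simp only [Finset.mem_range] at hp
        omega
      · intro k hk
        simp only [Finset.mem_filter, Finset.mem_range] at hk
        dsimp only
        have e1 : vC α k = uC α (k/2) := by simp [vC, if_pos hk.2]
        have e2 : vC α (2*m - k) = uC α (m - k/2) := by
          have hmod : (2*m - k) % 2 = 0 := by omega
          have hdiv : (2*m - k)/2 = m - k/2 := by omega
          simp [vC, if_pos hmod, hdiv]
        rw [e1, e2]
    rw [hred, identity_C3 α h1 h2 m]
    have hx : (x^2/4)^m = (1/4 : ℂ)^m * x^(2*m) := by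
      rw [div_pow, pow_mul]
      simp only [one_div, inv_pow]
      ring
    rw [hx]
    ring
  -- odd coefficients vanish
  have hodd : ∀ m : ℕ, (∑ kl ∈ Finset.HasAntidiagonal.antidiagonal (2*m+1), vC α kl.1 * vC α kl.2) * x^(2*m+1) = 0 := by
    intro m
    have : ∑ kl ∈ Finset.HasAntidiagonal.antidiagonal (2*m+1), vC α kl.1 * vC α kl.2 = 0 := by
      refine Finset.sum_eq_zero fun kl hkl => ?_
      have hn : kl.1 + kl.2 = 2*m+1 := Finset.HasAntidiagonal.mem_antidiagonal.1 hkl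
      rcases Nat.even_or_odd kl.1 with he | ho
      · have h2 : kl.2 % 2 = 1 := by
          rcases he with ⟨a, ha⟩; omega
        simp [vC, h2]
      · have h1 : kl.1 % 2 = 1 := Nat.odd_iff.1 ho
        simp [vC, h1]
    rw [this, zero_mul]
  -- assemble
  rw [hpFq1 x, hpFq1 (-x), hpFq2, hF x, hF (-x), hV]
  rw [show (∑' n, eC n * x^n) * (∑' n, vC α n * x^n)
        * ((∑' n, eC n * (-x)^n) * (∑' n, vC α n * x^n))
      = ((∑' n, eC n * x^n) * (∑' n, eC n * (-x)^n))
        * ((∑' n, vC α n * x^n) * (∑' n, vC α n * x^n)) by ring,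
    hE, one_mul, hG2]
  -- split into even and odd
  have heven_s : Summable (fun m => (∑ kl ∈ Finset.HasAntidiagonal.antidiagonal (2*m), vC α kl.1 * vC α kl.2) * x^(2*m)) :=
    hsumW.comp_injective (fun a b h => by dsimp at h; omega : Function.Injective (fun k : ℕ => 2*k))
  have hodd_s : Summable (fun m => (∑ kl ∈ Finset.HasAntidiagonal.antidiagonal (2*m+1), vC α kl.1 * vC α kl.2) * x^(2*m+1)) :=
    hsumW.comp_injective (fun a b h => by dsimp at h; omega : Function.Injective (fun k : ℕ => 2*k+1))
  rw [← tsum_even_add_odd heven_s hodd_s]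
  rw [tsum_congr hodd, tsum_zero, add_zero, tsum_congr hev]
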